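/- arXiv:math/0604026 — 2 statements merged into one kernel-verified Lean document; each statement's English description precedes it below -/
import Mathlib

section
/- For every odd positive integer n, the function F_n(x) = Σ_{m=0}^n ((−n)_m (1/2)_m / ((1)_m m!)) x^m is monotone decreasing on the interval [1,2], F_n(2) = 0, and for every x ∈ [1,2] one has 0 ≤ F_n(x) ≤ (1/2)_n/n! ≤ 1. -/
open Real Finset

/-- Pochhammer symbol `(a)_n = a (a+1) ⋯ (a+n-1)`. -/
noncomputable def poch (a : ℝ) (n : ℕ) : ℝ := ∏ i ∈ Finset.range n, (a + i)

/-- Terminating Gauss hypergeometric function `₂F₁(-n, 1/2; 1; x)`. -/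
noncomputable def F2F1 (n : ℕ) (x : ℝ) : ℝ :=
  ∑ m ∈ Finset.range (n + 1),
    poch (-(n : ℝ)) m * poch (1/2) m / (poch 1 m * (Nat.factorial m : ℝ)) * x ^ m

noncomputable def W (m : ℕ) : ℝ := ∏ i ∈ Finset.range m, (2*(i:ℝ)+1)/(2*i+2)

lemma poch_one (m : ℕ) : poch 1 m = (m.factorial : ℝ) := by
  induction m with
  | zero => simp [poch]
  | succ k ih =>
    simp only [poch, Finset.prod_range_succ] at *
    rw [ih, Nat.factorial_succ]; push_cast; ring

lemma poch_half (m : ℕ) : poch (1/2) m = W m * (m.factorial : ℝ) := by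
  induction m with
  | zero => simp [poch, W]
  | succ k ih =>
    simp only [poch, W, Finset.prod_range_succ] at *
    rw [ih, Nat.factorial_succ]
    push_cast
    field_simp
    ring

lemma W_nonneg (m : ℕ) : 0 ≤ W m := by
  apply Finset.prod_nonneg; intro i _; positivity

lemma W_le_one (m : ℕ) : W m ≤ 1 := by
  apply Finset.prod_le_one
  · intro i _; positivity
  · intro i _
    rw [div_le_one (by positivity)]; linarith

lemma poch_neg (n m : ℕ) (h : m ≤ n) :
    poch (-(n:ℝ)) m = (-1)^m * (m.factorial : ℝ) * (n.choose m : ℝ) := by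
  have : poch (-(n:ℝ)) m = ∏ i ∈ Finset.range m, (-((n - i : ℕ) : ℝ)) := by
    apply Finset.prod_congr rfl
    intro i hi
    have hi' : i ≤ n := le_trans (Nat.le_of_lt_succ (Nat.lt_succ_of_lt (Finset.mem_range.mp hi))) h
    rw [Nat.cast_sub hi']; ring
  have h2 : ∀ i : ℕ, (-((n - i : ℕ) : ℝ)) = (-1) * ((n - i : ℕ) : ℝ) := fun i => by ring
  rw [this]
  rw [Finset.prod_congr rfl (fun i _ => h2 i), Finset.prod_mul_distrib, Finset.prod_const,
    Finset.card_range]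
  rw [← Nat.cast_prod, ← Nat.descFactorial_eq_prod_range, Nat.descFactorial_eq_factorial_mul_choose]
  push_cast
  ring

lemma F2F1_eq_sum (n : ℕ) (x : ℝ) :
    F2F1 n x = ∑ m ∈ Finset.range (n + 1), (-1)^m * (n.choose m : ℝ) * W m * x ^ m := by
  unfold F2F1
  apply Finset.sum_congr rfl
  intro m hm
  have hm' : m ≤ n := Nat.lt_succ_iff.mp (Finset.mem_range.mp hm)
  rw [poch_neg n m hm', poch_half, poch_one]
  have : (m.factorial : ℝ) ≠ 0 := Nat.cast_ne_zero.mpr m.factorial_ne_zero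
  field_simp

noncomputable def J (n : ℕ) (x : ℝ) : ℝ := ∫ u in (0:ℝ)..π, (1 - x * Real.sin u ^ 2) ^ n

lemma J_eq (n : ℕ) (x : ℝ) :
    J n x = π * ∑ m ∈ Finset.range (n + 1), (-1)^m * (n.choose m : ℝ) * W m * x ^ m := by
  unfold J
  have hpt : ∀ u : ℝ, (1 - x * Real.sin u ^ 2) ^ n
      = ∑ m ∈ Finset.range (n + 1), (-1)^m * (n.choose m : ℝ) * x ^ m * Real.sin u ^ (2*m) := by
    intro u
    have := add_pow (-(x * Real.sin u ^ 2)) 1 n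
    simp only [one_pow, mul_one] at this
    rw [show (1 - x * Real.sin u ^ 2) = -(x * Real.sin u ^ 2) + 1 by ring, this]
    apply Finset.sum_congr rfl
    intro m _
    rw [neg_pow, mul_pow, pow_mul]
    ring
  simp only [hpt]
  rw [intervalIntegral.integral_finset_sum]
  · rw [Finset.mul_sum]
    apply Finset.sum_congr rfl
    intro m _
    rw [intervalIntegral.integral_const_mul, integral_sin_pow_even]
    unfold W
    ring
  · intro m _
    apply Continuous.intervalIntegrable
    fun_prop

lemma F2F1_eq_J (n : ℕ) (x : ℝ) : F2F1 n x = (1/π) * J n x := by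
  rw [J_eq, F2F1_eq_sum]
  field_simp

lemma J_two (n : ℕ) (hodd : Odd n) : J n 2 = 0 := by
  unfold J
  have h1 : ∀ u : ℝ, (1 - 2 * Real.sin u ^ 2) = Real.cos (2 * u) := by
    intro u
    rw [Real.cos_two_mul]
    have := Real.sin_sq_add_cos_sq u
    linarith
  simp only [h1]
  have h2 : (∫ u in (0:ℝ)..π, Real.cos (2 * u) ^ n)
      = (2:ℝ)⁻¹ • ∫ v in (0:ℝ)..(2*π), Real.cos v ^ n := by
    have := intervalIntegral.integral_comp_mul_left (a := (0:ℝ)) (b := π)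
      (fun v => Real.cos v ^ n) (two_ne_zero (α := ℝ))
    simpa using this
  rw [h2]
  have hint : ∀ a b : ℝ, IntervalIntegrable (fun v => Real.cos v ^ n) MeasureTheory.volume a b :=
    fun a b => (Continuous.intervalIntegrable (by fun_prop) a b)
  have h3 : (∫ v in (0:ℝ)..(2*π), Real.cos v ^ n)
      = (∫ v in (0:ℝ)..π, Real.cos v ^ n) + ∫ v in π..(2*π), Real.cos v ^ n := by
    rw [intervalIntegral.integral_add_adjacent_intervals (hint 0 π) (hint π (2*π))]
  have h4 : (∫ v in π..(2*π), Real.cos v ^ n) = - ∫ v in (0:ℝ)..π, Real.cos v ^ n := by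
    have := intervalIntegral.integral_comp_add_right (a := (0:ℝ)) (b := π)
      (fun v => Real.cos v ^ n) π
    rw [zero_add, ← two_mul] at this
    rw [← this]
    rw [← intervalIntegral.integral_neg]
    apply intervalIntegral.integral_congr
    intro u _
    simp only
    rw [Real.cos_add_pi, hodd.neg_pow]
  rw [h3, h4]
  simp

lemma J_one (n : ℕ) : J n 1 = π * W n := by
  unfold J
  have h1 : ∀ u : ℝ, (1 - 1 * Real.sin u ^ 2 : ℝ) ^ n = Real.sin (π/2 - u) ^ (2*n) := by
    intro u
    rw [Real.sin_pi_div_two_sub, pow_mul]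
    congr 1
    have := Real.sin_sq_add_cos_sq u
    linarith
  simp only [h1]
  have h2 : (∫ u in (0:ℝ)..π, Real.sin (π/2 - u) ^ (2*n))
      = ∫ v in (π/2 - π)..(π/2 - 0), Real.sin v ^ (2*n) :=
    intervalIntegral.integral_comp_sub_left (fun v => Real.sin v ^ (2*n)) (π/2)
  rw [h2]
  have hint : ∀ a b : ℝ, IntervalIntegrable (fun v => Real.sin v ^ (2*n)) MeasureTheory.volume a b :=
    fun a b => (Continuous.intervalIntegrable (by fun_prop) a b)
  have h3 : (∫ v in (π/2 - π)..(π/2 - 0), Real.sin v ^ (2*n))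
      = (∫ v in (-(π/2))..(0:ℝ), Real.sin v ^ (2*n)) + ∫ v in (0:ℝ)..(π/2), Real.sin v ^ (2*n) := by
    rw [intervalIntegral.integral_add_adjacent_intervals (hint _ _) (hint _ _)]
    rw [show π/2 - π = -(π/2) by ring, sub_zero]
  have h4 : (∫ v in (-(π/2))..(0:ℝ), Real.sin v ^ (2*n))
      = ∫ v in (0:ℝ)..(π/2), Real.sin v ^ (2*n) := by
    have := intervalIntegral.integral_comp_neg (a := (0:ℝ)) (b := π/2)
      (fun v => Real.sin v ^ (2*n))
    rw [neg_zero] at this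
    rw [← this]
    apply intervalIntegral.integral_congr
    intro u _
    simp [Real.sin_neg, neg_pow, pow_mul]
  have h5 : (∫ v in (π/2)..π, Real.sin v ^ (2*n))
      = ∫ v in (0:ℝ)..(π/2), Real.sin v ^ (2*n) := by
    have := intervalIntegral.integral_comp_sub_left (a := (0:ℝ)) (b := π/2)
      (fun v => Real.sin v ^ (2*n)) π
    rw [sub_zero, show π - π/2 = π/2 by ring] at this
    rw [← this]
    symm
    apply intervalIntegral.integral_congr
    intro u _
    simp [Real.sin_pi_sub]
  have h6 : (∫ v in (0:ℝ)..π, Real.sin v ^ (2*n))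
      = (∫ v in (0:ℝ)..(π/2), Real.sin v ^ (2*n)) + ∫ v in (π/2)..π, Real.sin v ^ (2*n) := by
    rw [intervalIntegral.integral_add_adjacent_intervals (hint _ _) (hint _ _)]
  have h7 := integral_sin_pow_even (n := n)
  rw [h3, h4]
  rw [h6, h5] at h7
  unfold W
  linarith [h7]

lemma J_strictAnti (n : ℕ) (hodd : Odd n) {x y : ℝ} (hx : 1 ≤ x) (hxy : x < y) (hy : y ≤ 2) :
    J n y < J n x := by
  unfold J
  apply intervalIntegral.integral_lt_integral_of_continuousOn_of_le_of_exists_lt pi_pos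
  · exact Continuous.continuousOn (by fun_prop)
  · exact Continuous.continuousOn (by fun_prop)
  · intro u _
    apply (Odd.strictMono_pow hodd).monotone
    nlinarith [sq_nonneg (Real.sin u)]
  · refine ⟨π/2, ⟨by positivity, by linarith [pi_pos]⟩, ?_⟩
    apply Odd.strictMono_pow hodd
    rw [Real.sin_pi_div_two]
    nlinarith

theorem stmt5 (n : ℕ) (hodd : Odd n) (hpos : 0 < n) :
    StrictAntiOn (F2F1 n) (Set.Icc 1 2)
    ∧ F2F1 n 2 = 0
    ∧ ∀ x ∈ Set.Icc (1:ℝ) 2,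
        0 ≤ F2F1 n x ∧ F2F1 n x ≤ poch (1/2) n / (Nat.factorial n : ℝ)
          ∧ poch (1/2) n / (Nat.factorial n : ℝ) ≤ 1 := by
  have hfac : (n.factorial : ℝ) ≠ 0 := Nat.cast_ne_zero.mpr n.factorial_ne_zero
  have hW : poch (1/2) n / (n.factorial : ℝ) = W n := by
    rw [poch_half]; field_simp
  have hanti : StrictAntiOn (F2F1 n) (Set.Icc 1 2) := by
    intro x hx y hy hxy
    rw [F2F1_eq_J, F2F1_eq_J]
    have := J_strictAnti n hodd hx.1 hxy hy.2
    have hπ : (0:ℝ) < 1/π := by positivity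
    exact mul_lt_mul_of_pos_left this hπ
  have h2 : F2F1 n 2 = 0 := by
    rw [F2F1_eq_J, J_two n hodd]; ring
  have h1 : F2F1 n 1 = W n := by
    rw [F2F1_eq_J, J_one n]
    field_simp
  refine ⟨hanti, h2, ?_⟩
  intro x hx
  have hx1 : (1:ℝ) ∈ Set.Icc (1:ℝ) 2 := ⟨le_refl _, by norm_num⟩
  have hx2 : (2:ℝ) ∈ Set.Icc (1:ℝ) 2 := ⟨by norm_num, le_refl _⟩
  refine ⟨?_, ?_, ?_⟩
  · rcases eq_or_lt_of_le hx.2 with h | h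
    · rw [h, h2]
    · have := hanti hx hx2 h
      rw [h2] at this
      linarith
  · rw [hW]
    rcases eq_or_lt_of_le hx.1 with h | h
    · rw [← h, h1]
    · have := hanti hx1 hx h
      rw [h1] at this
      linarith
  · rw [hW]; exact W_le_one n
end

section
/- For every nonnegative integer n and every real x, Σ_{m=0}^n ((−n)_m (1/2)_m / ((1)_m m!)) (1−x)^m = ((1/2)_n/n!) · Σ_{m=0}^n ((−n)_m (1/2)_m / ((1/2−n)_m m!)) x^m. In hypergeometric notation: ₂F₁(−n,1/2;1;1−x) = ((1/2)_n/n!) · ₂F₁(−n,1/2;1/2−n;x). -/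
open Real Finset

lemma poch_zero (a : ℝ) : poch a 0 = 1 := by simp [poch]

lemma poch_succ (a : ℝ) (n : ℕ) : poch a (n + 1) = poch a n * (a + n) := by
  simp [poch, Finset.prod_range_succ]

lemma poch_succ' (a : ℝ) (n : ℕ) : poch a (n + 1) = a * poch (a + 1) n := by
  simp only [poch, Finset.prod_range_succ']
  rw [mul_comm]
  simp only [Nat.cast_zero, add_zero]
  congr 1
  apply Finset.prod_congr rfl
  intro i _
  push_cast
  ring

lemma poch_add (a : ℝ) (m k : ℕ) : poch a (m + k) = poch a m * poch (a + m) k := by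
  simp only [poch, Finset.prod_range_add]
  congr 1
  apply Finset.prod_congr rfl
  intro i _
  push_cast
  ring

lemma poch_one_s9 (n : ℕ) : poch 1 n = (Nat.factorial n : ℝ) := by
  induction n with
  | zero => simp [poch]
  | succ n ih => rw [poch_succ, ih, Nat.factorial_succ]; push_cast; ring

lemma poch_nat (k j : ℕ) : (Nat.factorial k : ℝ) * poch ((k : ℝ) + 1) j = (Nat.factorial (k + j) : ℝ) := by
  induction j with
  | zero => simp [poch]
  | succ j ih =>
    rw [poch_succ, ← mul_assoc, ih]
    rw [show k + (j+1) = (k+j)+1 by ring, Nat.factorial_succ]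
    push_cast; ring

lemma poch_neg_nat (N j : ℕ) (h : j ≤ N) :
    poch (-(N : ℝ)) j = (-1 : ℝ)^j * (N.choose j : ℝ) * (Nat.factorial j : ℝ) := by
  induction j with
  | zero => simp [poch]
  | succ j ih =>
    have hj : j ≤ N := Nat.le_of_succ_le h
    rw [poch_succ, ih hj]
    have hc : (N.choose (j+1) : ℝ) * (j+1) = (N.choose j : ℝ) * (N - j) := by
      have := Nat.add_one_mul_choose_eq N j
      have h2 : N.choose (j+1) * (j+1) = N.choose j * (N - j) := by
        rw [Nat.choose_succ_right_eq]
      calc (N.choose (j+1) : ℝ) * (j+1) = ((N.choose (j+1) * (j+1) : ℕ) : ℝ) := by push_cast; ring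
        _ = ((N.choose j * (N - j) : ℕ) : ℝ) := by rw [h2]
        _ = (N.choose j : ℝ) * (N - j) := by push_cast [Nat.cast_sub hj]; ring
    rw [Nat.factorial_succ]
    push_cast
    have : (-(N:ℝ) + j) = -((N:ℝ) - j) := by ring
    rw [this]
    have expand : (-1:ℝ)^(j+1) * (N.choose (j+1)) * ((j+1) * (Nat.factorial j)) =
        (-1:ℝ)^j * ((N.choose (j+1) : ℝ) * (j+1)) * (Nat.factorial j) * (-1) := by ring
    rw [expand, hc]
    ring

lemma poch_reflect (a : ℝ) (k : ℕ) : poch (a - k) k = (-1 : ℝ)^k * poch (1 - a) k := by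
  unfold poch
  rw [← Finset.prod_range_reflect (fun i => a - k + i) k]
  rw [show ((-1:ℝ)^k = ∏ _i ∈ Finset.range k, (-1:ℝ)) by simp, ← Finset.prod_mul_distrib]
  apply Finset.prod_congr rfl
  intro i hi
  simp only [Finset.mem_range] at hi
  have : (((k - 1 - i : ℕ)) : ℝ) = (k : ℝ) - 1 - i := by
    have : i + 1 ≤ k := hi
    push_cast [Nat.cast_sub (by omega : i ≤ k - 1), Nat.cast_sub (by omega : 1 ≤ k)]
    ring
  rw [this]
  ring

lemma lemA (N : ℕ) : ∀ (b c : ℝ),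
    ∑ j ∈ Finset.range (N + 1),
      (-1 : ℝ)^j * (N.choose j : ℝ) * poch b j * poch (c + j) (N - j) = poch (c - b) N := by
  induction N with
  | zero => intro b c; simp [poch]
  | succ N ih =>
    intro b c
    rw [Finset.sum_range_succ']
    have hf0 : (-1:ℝ)^0 * ((N+1).choose 0 : ℝ) * poch b 0 * poch (c + (0:ℕ)) (N + 1 - 0)
        = poch c (N+1) := by simp [poch_zero]
    have hsplit : ∀ j ∈ Finset.range (N + 1),
        (-1:ℝ)^(j+1) * ((N+1).choose (j+1) : ℝ) * poch b (j+1) * poch (c + ((j:ℕ)+1 : ℕ)) (N + 1 - (j+1))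
        = (-1:ℝ)^(j+1) * (N.choose (j+1) : ℝ) * poch b (j+1) * poch (c + ((j+1 : ℕ))) (N - j)
          + (-b) * ((-1:ℝ)^j * (N.choose j : ℝ) * poch (b+1) j * poch ((c+1) + j) (N - j)) := by
      intro j hj
      have : (N+1).choose (j+1) = N.choose j + N.choose (j+1) := Nat.choose_succ_succ N j
      rw [this]
      have hsub : N + 1 - (j+1) = N - j := by omega
      rw [hsub]
      rw [poch_succ' b j]
      have : poch (c + ((j:ℕ)+1:ℕ)) (N - j) = poch ((c+1) + j) (N - j) := by
        congr 1; push_cast; ring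
      rw [this]
      push_cast
      ring
    rw [Finset.sum_congr rfl hsplit, Finset.sum_add_distrib]
    -- second sum via IH
    rw [← Finset.mul_sum, ih (b+1) (c+1)]
    -- first sum plus f 0
    have key : (∑ j ∈ Finset.range (N + 1),
        (-1:ℝ)^(j+1) * (N.choose (j+1) : ℝ) * poch b (j+1) * poch (c + ((j+1 : ℕ))) (N - j))
        + (-1:ℝ)^0 * ((N+1).choose 0 : ℝ) * poch b 0 * poch (c + (0:ℕ)) (N + 1 - 0)
        = (c + N) * poch (c - b) N := by
      have hF : ∀ j ∈ Finset.range (N + 1),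
          (-1:ℝ)^(j+1) * (N.choose (j+1) : ℝ) * poch b (j+1) * poch (c + ((j+1 : ℕ))) (N - j)
          = (fun j => (-1:ℝ)^j * (N.choose j : ℝ) * poch b j * poch (c + j) (N + 1 - j)) (j+1) := by
        intro j hj
        simp only []
        congr 2
        omega
      have hf0' : (-1:ℝ)^0 * ((N+1).choose 0 : ℝ) * poch b 0 * poch (c + (0:ℕ)) (N + 1 - 0)
          = (fun j => (-1:ℝ)^j * (N.choose j : ℝ) * poch b j * poch (c + j) (N + 1 - j)) 0 := by
        norm_num
      rw [Finset.sum_congr rfl hF, hf0', ← Finset.sum_range_succ' (fun j => (-1:ℝ)^j * (N.choose j : ℝ) * poch b j * poch (c + j) (N + 1 - j)) (N+1)]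
      rw [Finset.sum_range_succ]
      have hlast : (-1:ℝ)^(N+1) * (N.choose (N+1) : ℝ) * poch b (N+1) * poch (c + ((N+1:ℕ))) (N + 1 - (N+1)) = 0 := by
        simp [Nat.choose_succ_self]
      rw [hlast, add_zero]
      have hG : ∀ j ∈ Finset.range (N + 1),
          (-1:ℝ)^j * (N.choose j : ℝ) * poch b j * poch (c + j) (N + 1 - j)
          = (c + N) * ((-1:ℝ)^j * (N.choose j : ℝ) * poch b j * poch (c + j) (N - j)) := by
        intro j hj
        simp only [Finset.mem_range] at hj
        have h1 : N + 1 - j = (N - j) + 1 := by omega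
        rw [h1, poch_succ]
        have h2 : ((N - j : ℕ) : ℝ) = (N : ℝ) - j := by
          push_cast [Nat.cast_sub (by omega : j ≤ N)]; ring
        rw [h2]
        ring
      rw [Finset.sum_congr rfl hG, ← Finset.mul_sum, ih b c]
    have hP : poch (c + 1 - (b + 1)) N = poch (c - b) N := by norm_num
    rw [hP, poch_succ (c - b) N]
    linear_combination key

lemma lemB (n k : ℕ) (h : k ≤ n) :
    poch (1/2 - (n:ℝ)) k * ((-1:ℝ)^k * poch (1/2) (n - k)) = poch (1/2) n := by
  have h2 : poch (1/2 - (n:ℝ)) k = (-1:ℝ)^k * poch (1 - (1/2 - ((n-k:ℕ):ℝ))) k := by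
    have : (1/2 - (n:ℝ)) = (1/2 - ((n-k:ℕ):ℝ)) - k := by
      rw [Nat.cast_sub h]; ring
    rw [this, poch_reflect]
  rw [h2]
  have h3 : (1 - (1/2 - ((n-k:ℕ):ℝ))) = 1/2 + ((n-k:ℕ):ℝ) := by ring
  rw [h3]
  have h4 : poch (1/2) (n - k) * poch (1/2 + ((n-k:ℕ):ℝ)) k = poch (1/2) n := by
    rw [← poch_add]
    congr 1
    omega
  have hsq : (-1:ℝ)^k * (-1:ℝ)^k = 1 := by
    rw [← pow_add]
    simp [pow_mul, ← two_mul]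
  calc (-1:ℝ)^k * poch (1/2 + ((n-k:ℕ):ℝ)) k * ((-1:ℝ)^k * poch (1/2) (n - k))
      = ((-1:ℝ)^k * (-1:ℝ)^k) * (poch (1/2) (n-k) * poch (1/2 + ((n-k:ℕ):ℝ)) k) := by ring
    _ = poch (1/2) n := by rw [hsq, h4, one_mul]

lemma poch_half_ne (n k : ℕ) (h : k ≤ n) : poch (1/2 - (n:ℝ)) k ≠ 0 := by
  unfold poch
  rw [Finset.prod_ne_zero_iff]
  intro i hi
  simp only [Finset.mem_range] at hi
  have hin : i < n := lt_of_lt_of_le hi h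
  have h1 : ((i:ℝ)) ≤ (n:ℝ) - 1 := by
    have : (i:ℕ) + 1 ≤ n := hin
    have := Nat.cast_le (α := ℝ).mpr this
    push_cast at this
    linarith
  intro hz
  have : (n:ℝ) - i = 1/2 := by linarith
  linarith

theorem stmt9 (n : ℕ) (x : ℝ) :
    ∑ m ∈ Finset.range (n + 1),
        poch (-(n : ℝ)) m * poch (1/2) m / (poch 1 m * (Nat.factorial m : ℝ)) * (1 - x) ^ m
      = (poch (1/2) n / (Nat.factorial n : ℝ)) *
          ∑ m ∈ Finset.range (n + 1),
            poch (-(n : ℝ)) m * poch (1/2) m /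
              (poch (1/2 - (n : ℝ)) m * (Nat.factorial m : ℝ)) * x ^ m := by
  -- expand (1-x)^m over range (n+1)
  have hbin : ∀ m ∈ Finset.range (n+1), (1 - x)^m
      = ∑ k ∈ Finset.range (n+1), (-1:ℝ)^k * x^k * (m.choose k : ℝ) := by
    intro m hm
    simp only [Finset.mem_range] at hm
    have h1 : (1 - x) = (-x) + 1 := by ring
    rw [h1, add_pow]
    calc ∑ k ∈ Finset.range (m+1), (-x)^k * 1^(m-k) * (m.choose k : ℝ)
        = ∑ k ∈ Finset.range (n+1), (-x)^k * 1^(m-k) * (m.choose k : ℝ) := by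
          apply Finset.sum_subset
          · exact Finset.range_subset_range.mpr (by omega)
          · intro k _ hk
            simp only [Finset.mem_range, not_lt] at hk
            rw [Nat.choose_eq_zero_of_lt (by omega)]
            simp
      _ = ∑ k ∈ Finset.range (n+1), (-1:ℝ)^k * x^k * (m.choose k : ℝ) := by
          apply Finset.sum_congr rfl
          intro k _
          rw [one_pow, neg_pow]
          ring
  rw [Finset.sum_congr rfl (fun m hm => by rw [hbin m hm])]
  simp only [Finset.mul_sum]
  rw [Finset.sum_comm]
  apply Finset.sum_congr rfl
  intro k hk
  simp only [Finset.mem_range] at hk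
  have hkn : k ≤ n := by omega
  set N := n - k with hN
  -- coefficient identity
  have hcoef : ∑ m ∈ Finset.range (n+1),
      poch (-(n : ℝ)) m * poch (1/2) m / (poch 1 m * (Nat.factorial m : ℝ))
        * ((-1:ℝ)^k * (m.choose k : ℝ))
      = poch (1/2) n / (Nat.factorial n : ℝ) *
          (poch (-(n : ℝ)) k * poch (1/2) k /
            (poch (1/2 - (n : ℝ)) k * (Nat.factorial k : ℝ))) := by
    have hdrop : ∑ m ∈ Finset.range (n+1),
        poch (-(n : ℝ)) m * poch (1/2) m / (poch 1 m * (Nat.factorial m : ℝ))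
          * ((-1:ℝ)^k * (m.choose k : ℝ))
        = ∑ j ∈ Finset.range (N+1),
        poch (-(n : ℝ)) (k+j) * poch (1/2) (k+j) / (poch 1 (k+j) * (Nat.factorial (k+j) : ℝ))
          * ((-1:ℝ)^k * ((k+j).choose k : ℝ)) := by
      rw [Finset.range_eq_Ico, ← Finset.sum_Ico_consecutive _ (Nat.zero_le k) (by omega : k ≤ n+1)]
      have hz : ∑ m ∈ Finset.Ico 0 k,
          poch (-(n : ℝ)) m * poch (1/2) m / (poch 1 m * (Nat.factorial m : ℝ))
            * ((-1:ℝ)^k * (m.choose k : ℝ)) = 0 := by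
        apply Finset.sum_eq_zero
        intro m hm
        simp only [Finset.mem_Ico] at hm
        rw [Nat.choose_eq_zero_of_lt hm.2]
        simp
      rw [hz, zero_add, Finset.sum_Ico_eq_sum_range]
      have : n + 1 - k = N + 1 := by omega
      rw [this]
    rw [hdrop]
    have hFk : ((Nat.factorial k : ℝ)) ≠ 0 := Nat.cast_ne_zero.mpr (Nat.factorial_ne_zero k)
    have hFn : ((Nat.factorial n : ℝ)) ≠ 0 := Nat.cast_ne_zero.mpr (Nat.factorial_ne_zero n)
    have htw : ∀ j ∈ Finset.range (N+1),
        poch (-(n : ℝ)) (k+j) * poch (1/2) (k+j) / (poch 1 (k+j) * (Nat.factorial (k+j) : ℝ))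
          * ((-1:ℝ)^k * ((k+j).choose k : ℝ))
        = ((-1:ℝ)^k * poch (-(n:ℝ)) k * poch (1/2) k / ((Nat.factorial k : ℝ) * (Nat.factorial n : ℝ)))
            * ((-1:ℝ)^j * (N.choose j : ℝ) * poch (1/2 + (k:ℝ)) j * poch (((k:ℝ)+1) + (j:ℝ)) (N - j)) := by
      intro j hj
      simp only [Finset.mem_range] at hj
      have hjN : j ≤ N := by omega
      have hFkj : ((Nat.factorial (k+j) : ℝ)) ≠ 0 := Nat.cast_ne_zero.mpr (Nat.factorial_ne_zero _)
      have hFj : ((Nat.factorial j : ℝ)) ≠ 0 := Nat.cast_ne_zero.mpr (Nat.factorial_ne_zero j)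
      have h1 : poch (-(n:ℝ)) (k+j)
          = poch (-(n:ℝ)) k * ((-1:ℝ)^j * (N.choose j : ℝ) * (Nat.factorial j : ℝ)) := by
        rw [poch_add]
        congr 1
        have harg : -(n:ℝ) + (k:ℝ) = -((N:ℕ):ℝ) := by
          rw [Nat.cast_sub hkn]; ring
        rw [harg, poch_neg_nat N j hjN]
      have h2 : poch (1/2) (k+j) = poch (1/2) k * poch (1/2 + (k:ℝ)) j := poch_add _ _ _
      have h3 : poch 1 (k+j) = ((Nat.factorial (k+j)) : ℝ) := poch_one_s9 _
      have h4 : ((k+j).choose k : ℝ)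
          = ((Nat.factorial (k+j)) : ℝ) / ((Nat.factorial k : ℝ) * (Nat.factorial j : ℝ)) := by
        rw [eq_div_iff (by positivity)]
        have := Nat.choose_mul_factorial_mul_factorial (Nat.le_add_right k j)
        have h' : (k+j).choose k * Nat.factorial k * Nat.factorial j = Nat.factorial (k+j) := by
          simpa using this
        calc ((k+j).choose k : ℝ) * ((Nat.factorial k : ℝ) * (Nat.factorial j : ℝ))
            = (((k+j).choose k * Nat.factorial k * Nat.factorial j : ℕ) : ℝ) := by push_cast; ring
          _ = ((Nat.factorial (k+j)) : ℝ) := by rw [h']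
      have h5 : poch (((k:ℝ)+1) + (j:ℝ)) (N - j)
          = ((Nat.factorial n : ℝ)) / ((Nat.factorial (k+j)) : ℝ) := by
        rw [eq_div_iff hFkj]
        have harg : ((k:ℝ)+1) + (j:ℝ) = (((k+j:ℕ)):ℝ) + 1 := by push_cast; ring
        rw [harg]
        rw [mul_comm, poch_nat (k+j) (N-j)]
        have : k + j + (N - j) = n := by omega
        rw [this]
      rw [h1, h2, h3, h4, h5]
      field_simp
    rw [Finset.sum_congr rfl htw, ← Finset.mul_sum, lemA N (1/2 + (k:ℝ)) ((k:ℝ)+1)]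
    have harg : ((k:ℝ)+1) - (1/2 + (k:ℝ)) = 1/2 := by ring
    rw [harg]
    have hB := lemB n k hkn
    have hpn : poch (1/2 - (n:ℝ)) k ≠ 0 := poch_half_ne n k hkn
    rw [show n - k = N from rfl] at hB
    set a1 := poch (-(n:ℝ)) k
    set a2 := poch (1/2) k
    set pN := poch (1/2) N
    set pk := poch (1/2 - (n:ℝ)) k
    rw [← hB]
    field_simp
  have hsw : ∑ m ∈ Finset.range (n+1),
      poch (-(n : ℝ)) m * poch (1/2) m / (poch 1 m * (Nat.factorial m : ℝ))
        * ((-1:ℝ)^k * x^k * (m.choose k : ℝ))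
      = (∑ m ∈ Finset.range (n+1),
          poch (-(n : ℝ)) m * poch (1/2) m / (poch 1 m * (Nat.factorial m : ℝ))
            * ((-1:ℝ)^k * (m.choose k : ℝ))) * x^k := by
    rw [Finset.sum_mul]
    apply Finset.sum_congr rfl
    intro m _
    ring
  rw [hsw, hcoef]
  ring
end
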